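/- For k ≥ 1 and t ∈ (0,1), the measure μ_t = (1 − t^k + t^{k+1}) δ_{−t^k} + (t^k − t^{k+1}) δ_{1−t^k} satisfies: Ψ^{wds}_{μ_t}(x) = 0 for x ≤ −t^k, Ψ^{wds}_{μ_t}(x) = 1 − t^k + t/(1−t) for −t^k < x < 1−t^k, and Ψ^{wds}_{μ_t}(x) = +∞ for x ≥ 1−t^k. -/

import Mathlib

open MeasureTheory Set Filter
open scoped ENNReal

noncomputable def meanM (μ : Measure ℝ) : ℝ := ∫ y, y ∂μ

noncomputable def rSupE (μ : Measure ℝ) : EReal :=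
  sInf ((fun z : ℝ => (z : EReal)) '' {z : ℝ | μ (Ici z) = 0})

noncomputable def psiWds (μ : Measure ℝ) (x : ℝ) : EReal :=
  if (x : EReal) < rSupE μ then
    ((((∫ y in Ici x, y ∂μ) - meanM μ) / (μ (Ici x)).toReal : ℝ) : EReal)
  else ⊤

noncomputable def Kfun (μ : Measure ℝ) (x : ℝ) : ℝ :=
  (∫ y in Ici x, (y - x) ∂μ) - meanM μ

noncomputable def muD (k : ℕ) (t : ℝ) : Measure ℝ :=
  ENNReal.ofReal (1 - t ^ k + t ^ (k + 1)) • Measure.dirac (-(t ^ k))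
    + ENNReal.ofReal (t ^ k - t ^ (k + 1)) • Measure.dirac (1 - t ^ k)

lemma integrable_dirac' (f : ℝ → ℝ) (a : ℝ) : Integrable f (Measure.dirac a) :=
  (integrable_congr (ae_eq_dirac f)).2 (integrable_const _)

lemma setint (c d : ℝ) (hc : 0 ≤ c) (hd : 0 ≤ d) (a b : ℝ) (f : ℝ → ℝ) (s : Set ℝ)
    [Decidable (a ∈ s)] [Decidable (b ∈ s)] :
    ∫ y in s, f y ∂(ENNReal.ofReal c • Measure.dirac a + ENNReal.ofReal d • Measure.dirac b)
      = c * (if a ∈ s then f a else 0) + d * (if b ∈ s then f b else 0) := by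
  rw [Measure.restrict_add, Measure.restrict_smul, Measure.restrict_smul,
    restrict_dirac, restrict_dirac]
  rw [integral_add_measure, integral_smul_measure, integral_smul_measure]
  · split_ifs <;>
      simp [ENNReal.toReal_ofReal hc, ENNReal.toReal_ofReal hd]
  · split_ifs
    · exact ((integrable_dirac' f a).smul_measure ENNReal.ofReal_ne_top)
    · simp [Integrable]
  · split_ifs
    · exact ((integrable_dirac' f b).smul_measure ENNReal.ofReal_ne_top)
    · simp [Integrable]

lemma measapp (c d : ℝ) (hc : 0 ≤ c) (hd : 0 ≤ d) (a b : ℝ) (s : Set ℝ) (hs : MeasurableSet s)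
    [Decidable (a ∈ s)] [Decidable (b ∈ s)] :
    (ENNReal.ofReal c • Measure.dirac a + ENNReal.ofReal d • Measure.dirac b) s
      = ENNReal.ofReal ((if a ∈ s then c else 0) + (if b ∈ s then d else 0)) := by
  rw [Measure.add_apply, Measure.smul_apply, Measure.smul_apply,
    Measure.dirac_apply' _ hs, Measure.dirac_apply' _ hs]
  split_ifs with h1 h2 h2 <;>
    simp [Set.indicator_of_mem, Set.indicator_of_notMem, *, ENNReal.ofReal_add hc hd]

theorem stmt16 (k : ℕ) (hk : 1 ≤ k) (t : ℝ) (ht : t ∈ Ioo (0 : ℝ) 1) (x : ℝ) :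
    (x ≤ -(t ^ k) → psiWds (muD k t) x = (0 : ℝ)) ∧
    (-(t ^ k) < x → x < 1 - t ^ k →
      psiWds (muD k t) x = ((1 - t ^ k + t / (1 - t) : ℝ) : EReal)) ∧
    (1 - t ^ k ≤ x → psiWds (muD k t) x = ⊤) := by
  classical
  obtain ⟨ht0, ht1⟩ := ht
  set p : ℝ := t ^ k with hp
  have hp0 : 0 < p := pow_pos ht0 k
  have hp1 : p < 1 := pow_lt_one₀ ht0.le ht1 (by omega)
  have hpt : t ^ (k + 1) = p * t := by rw [hp, pow_succ]
  set c : ℝ := 1 - p + p * t with hcdef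
  set d : ℝ := p - p * t with hddef
  have hc0 : 0 < c := by nlinarith
  have hd0 : 0 < d := by nlinarith
  have hcd : c + d = 1 := by ring
  have hmu : muD k t = ENNReal.ofReal c • Measure.dirac (-p)
      + ENNReal.ofReal d • Measure.dirac (1 - p) := by
    rw [muD, hpt]
  -- mean
  have hmean : meanM (muD k t) = -(p * t) := by
    rw [meanM, hmu, ← setIntegral_univ, setint c d hc0.le hd0.le]
    simp; ring
  -- measure of Ici
  have hiciapp : ∀ z : ℝ, muD k t (Ici z)
      = ENNReal.ofReal ((if -p ∈ Ici z then c else 0) + (if 1 - p ∈ Ici z then d else 0)) := by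
    intro z
    rw [hmu, measapp c d hc0.le hd0.le _ _ _ measurableSet_Ici]
  -- the zero set of Ici-measure
  have hset : {z : ℝ | muD k t (Ici z) = 0} = Ioi (1 - p) := by
    ext z
    simp only [mem_setOf_eq, hiciapp z, mem_Ioi, ENNReal.ofReal_eq_zero]
    constructor
    · intro h
      by_contra hz
      push_neg at hz
      have h1 : (1 - p : ℝ) ∈ Ici z := hz
      rw [if_pos h1] at h
      split_ifs at h <;> nlinarith
    · intro h
      have h1 : (1 - p : ℝ) ∉ Ici z := by simp [mem_Ici]; linarith
      have h2 : (-p : ℝ) ∉ Ici z := by simp [mem_Ici]; nlinarith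
      rw [if_neg h1, if_neg h2]; norm_num
  have hge : ((1 - p : ℝ) : EReal) ≤ rSupE (muD k t) := by
    apply le_sInf
    rintro y ⟨z, hz, rfl⟩
    rw [hset] at hz
    dsimp only
    exact_mod_cast hz.le
  have hle : rSupE (muD k t) ≤ ((1 - p : ℝ) : EReal) := by
    by_contra h
    push_neg at h
    obtain ⟨z, hz1, hz2⟩ := EReal.exists_between_coe_real h
    refine absurd (sInf_le ?_) (not_le.2 hz2)
    refine ⟨z, ?_, rfl⟩
    rw [hset]
    exact_mod_cast hz1
  refine ⟨?_, ?_, ?_⟩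
  · intro hx
    have hlt : (x : EReal) < rSupE (muD k t) :=
      lt_of_lt_of_le (by exact_mod_cast show x < 1 - p by linarith) hge
    rw [psiWds, if_pos hlt]
    congr 1
    rw [hmu, setint c d hc0.le hd0.le, ← hmu, hmean]
    have h1 : (-p : ℝ) ∈ Ici x := hx
    have h2 : (1 - p : ℝ) ∈ Ici x := by simp [mem_Ici]; linarith
    rw [if_pos h1, if_pos h2]
    rw [show c * -p + d * (1 - p) - -(p * t) = 0 by rw [hcdef, hddef]; ring, zero_div]
  · intro hx1 hx2
    have hlt : (x : EReal) < rSupE (muD k t) :=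
      lt_of_lt_of_le (by exact_mod_cast hx2) hge
    rw [psiWds, if_pos hlt]
    congr 1
    rw [hmu, setint c d hc0.le hd0.le, ← hmu, hmean, hiciapp x]
    have h1 : (-p : ℝ) ∉ Ici x := by simp [mem_Ici]; linarith
    have h2 : (1 - p : ℝ) ∈ Ici x := hx2.le
    rw [if_neg h1, if_pos h2, if_neg h1, if_pos h2,
      ENNReal.toReal_ofReal (by linarith)]
    rw [hcdef, hddef]
    have h1t : (1 : ℝ) - t ≠ 0 := by linarith
    have hdne : p - p * t ≠ 0 := by nlinarith
    field_simp
    ring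
  · intro hx
    have : ¬ ((x : EReal) < rSupE (muD k t)) := by
      push_neg
      exact le_trans hle (by exact_mod_cast hx)
    rw [psiWds, if_neg this]
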